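/- (Proposition 1, statistics form.) Let V = {1,…,n} with a uniformly B-connected sequence of undirected edge sets (E_t), let P be a finite set of pseudo-points, and let T < ∞. For each robot j ∈ V, each time 1 ≤ τ ≤ T, and each p ∈ P, let m̃_τ^j(p) ≥ 0 and ζ̃_τ^j(p) ∈ ℝ be the mass and average observation of the mini-batch produced by robot j at time τ, and let A_t^{τ,j} ⊆ V be its flooding informed set. Define robot i's distributed statistics by m_t^i(p) = (1/n) Σ_{τ=1}^{min(t,T)} Σ_{j : i ∈ A_t^{τ,j}} m̃_τ^j(p) and m_t^i(p) ζ_t^i(p) = (1/n) Σ_{τ=1}^{min(t,T)} Σ_{j : i ∈ A_t^{τ,j}} m̃_τ^j(p) ζ̃_τ^j(p), and the centralized statistics by m_t^{ctr}(p) = (1/n) Σ_{τ=1}^{min(t,T)} Σ_{j=1}^{n} m̃_τ^j(p) and m_t^{ctr}(p) ζ_t^{ctr}(p) = (1/n) Σ_{τ=1}^{min(t,T)} Σ_{j=1}^{n} m̃_τ^j(p) ζ̃_τ^j(p). Then at time t* = (⌈T/B⌉ + (n − 1))B, every robot i ∈ V satisfies m_{t*}^i(p) = m_{t*}^{ctr}(p)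 for all p ∈ P, and ζ_{t*}^i(p) = ζ_{t*}^{ctr}(p) for all p with m_{t*}^{ctr}(p) > 0; consequently the sparse Gaussian-process mean and covariance functions, being determined by these statistics, coincide with those of the centralized estimator. -/
import Mathlib


/-- The union graph of the time-varying graph `E` over the window
`[k*B, (k+1)*B)`. -/
def windowGraph {n : ℕ} (E : ℕ → SimpleGraph (Fin n)) (B k : ℕ) :
    SimpleGraph (Fin n) :=
  ⨆ t ∈ Finset.Ico (k * B) ((k + 1) * B), E t

private lemma windowGraph_adj {n : ℕ} (E : ℕ → SimpleGraph (Fin n)) (B k : ℕ)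
    {a b : Fin n} :
    (windowGraph E B k).Adj a b ↔
      ∃ t ∈ Finset.Ico (k * B) ((k + 1) * B), (E t).Adj a b := by
  simp [windowGraph, SimpleGraph.iSup_adj]

private lemma walk_cross {V : Type*} [DecidableEq V] {G : SimpleGraph V}
    {S : Finset V} :
    ∀ {a b : V}, G.Walk a b → a ∈ S → b ∉ S →
      ∃ x ∈ S, ∃ y, y ∉ S ∧ G.Adj x y := by
  intro a b w
  induction w with
  | nil => intro h h'; exact absurd h h'
  | @cons a c b h w ih =>
    intro ha hb
    by_cases hc : c ∈ S
    · exact ih hc hb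
    · exact ⟨a, ha, c, hc, h⟩

private lemma exists_cross_edge {n : ℕ} {G : SimpleGraph (Fin n)}
    (hG : G.Connected) {S : Finset (Fin n)} (hne : S.Nonempty)
    (hS : S ≠ Finset.univ) :
    ∃ x ∈ S, ∃ y, y ∉ S ∧ G.Adj x y := by
  obtain ⟨a, ha⟩ := hne
  obtain ⟨b, hb⟩ : ∃ b, b ∉ S := by
    by_contra h
    push_neg at h
    exact hS (Finset.eq_univ_iff_forall.2 h)
  obtain ⟨w⟩ := hG a b
  exact walk_cross w ha hb

/-- **Proposition 1, statistics form.** Over a uniformly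
`B`-connected time-varying network of `n` robots, mini-batches of pseudo-point
statistics `(m̃_τ^j, ζ̃_τ^j)` are produced for `1 ≤ τ ≤ T` and spread by
flooding with informed sets `A^{τ,j}`.  Each robot `i` aggregates the
mini-batches it has received; the centralized estimator aggregates all of
them.  Then at time `t* = (⌈T/B⌉ + (n-1))·B` every robot's mass `m_{t*}^i(p)`
equals the centralized mass `m_{t*}^{ctr}(p)` for every pseudo-point `p`, and
its average `ζ_{t*}^i(p)` equals the centralized `ζ_{t*}^{ctr}(p)` whenever
`m_{t*}^{ctr}(p) > 0`; hence the sparse GP posteriors coincide. -/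
theorem distributed_stats_eq_centralized
    (n B T : ℕ) (hn : 1 ≤ n) (hB : 0 < B)
    (E : ℕ → SimpleGraph (Fin n)) [∀ t, DecidableRel (E t).Adj]
    (hconn : ∀ k : ℕ, (windowGraph E B k).Connected)
    (P : Type*) [Fintype P]
    (mTil zTil : Fin n → ℕ → P → ℝ)
    (hmTil : ∀ (j : Fin n) (τ : ℕ), 1 ≤ τ → τ ≤ T → ∀ p, 0 ≤ mTil j τ p)
    (A : ℕ → Fin n → ℕ → Finset (Fin n))
    (hA0 : ∀ (τ : ℕ) (j : Fin n), A τ j τ = {j})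
    (hAstep : ∀ (τ : ℕ) (j : Fin n) (t : ℕ), τ ≤ t →
      A τ j (t + 1) = A τ j t ∪
        Finset.univ.filter (fun i => ∃ r ∈ A τ j t, (E t).Adj i r))
    (mDist zDist : Fin n → ℕ → P → ℝ)
    (hmDist : ∀ (i : Fin n) (t : ℕ) (p : P),
      mDist i t p = (1 / n) * ∑ τ ∈ Finset.Icc 1 (min t T),
        ∑ j ∈ Finset.univ.filter (fun j => i ∈ A τ j t), mTil j τ p)
    (hzDist : ∀ (i : Fin n) (t : ℕ) (p : P),
      mDist i t p * zDist i t p = (1 / n) * ∑ τ ∈ Finset.Icc 1 (min t T),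
        ∑ j ∈ Finset.univ.filter (fun j => i ∈ A τ j t),
          mTil j τ p * zTil j τ p)
    (mCtr zCtr : ℕ → P → ℝ)
    (hmCtr : ∀ (t : ℕ) (p : P),
      mCtr t p = (1 / n) * ∑ τ ∈ Finset.Icc 1 (min t T),
        ∑ j : Fin n, mTil j τ p)
    (hzCtr : ∀ (t : ℕ) (p : P),
      mCtr t p * zCtr t p = (1 / n) * ∑ τ ∈ Finset.Icc 1 (min t T),
        ∑ j : Fin n, mTil j τ p * zTil j τ p) :
    ∀ i : Fin n, ∀ p : P,
      mDist i ((T ⌈/⌉ B + (n - 1)) * B) p = mCtr ((T ⌈/⌉ B + (n - 1)) * B) p ∧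
      (0 < mCtr ((T ⌈/⌉ B + (n - 1)) * B) p →
        zDist i ((T ⌈/⌉ B + (n - 1)) * B) p =
          zCtr ((T ⌈/⌉ B + (n - 1)) * B) p) := by
  set t' : ℕ := (T ⌈/⌉ B + (n - 1)) * B with ht'
  -- monotonicity of informed sets
  have hmono : ∀ (τ : ℕ) (j : Fin n) {s t : ℕ}, τ ≤ s → s ≤ t →
      A τ j s ⊆ A τ j t := by
    intro τ j s t hτs hst
    induction t, hst using Nat.le_induction with
    | base => exact Finset.Subset.refl _
    | succ t hst ih =>
      rw [hAstep τ j t (hτs.trans hst)]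
      exact ih.trans Finset.subset_union_left
  have hself : ∀ (τ : ℕ) (j : Fin n) {t : ℕ}, τ ≤ t → j ∈ A τ j t := by
    intro τ j t hτt
    exact hmono τ j le_rfl hτt (by rw [hA0]; exact Finset.mem_singleton_self j)
  -- growth over one window
  have hgrow : ∀ (τ : ℕ) (j : Fin n) (k : ℕ), τ ≤ k * B →
      A τ j (k * B) = Finset.univ ∨
      (A τ j (k * B)).card + 1 ≤ (A τ j ((k + 1) * B)).card := by
    intro τ j k hτ
    by_cases hu : A τ j (k * B) = Finset.univ
    · exact Or.inl hu
    right
    obtain ⟨x, hx, y, hy, hadj⟩ :=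
      exists_cross_edge (hconn k) ⟨j, hself τ j hτ⟩ hu
    rw [windowGraph_adj] at hadj
    obtain ⟨t, ht, hadj⟩ := hadj
    rw [Finset.mem_Ico] at ht
    have hτt : τ ≤ t := hτ.trans ht.1
    have hy1 : y ∈ A τ j (t + 1) := by
      rw [hAstep τ j t hτt]
      refine Finset.mem_union_right _ ?_
      simp only [Finset.mem_filter, Finset.mem_univ, true_and]
      exact ⟨x, hmono τ j hτ ht.1 hx, hadj.symm⟩
    have hsub : insert y (A τ j (k * B)) ⊆ A τ j ((k + 1) * B) := by
      refine Finset.insert_subset ?_ ?_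
      · exact hmono τ j (hτt.trans (Nat.le_succ t)) ht.2 hy1
      · exact hmono τ j hτ (Nat.mul_le_mul_right B (Nat.le_succ k))
    calc (A τ j (k * B)).card + 1 = (insert y (A τ j (k * B))).card :=
          (Finset.card_insert_of_notMem hy).symm
      _ ≤ (A τ j ((k + 1) * B)).card := Finset.card_le_card hsub
  -- cardinality lower bound
  have hcard : ∀ (τ : ℕ) (j : Fin n) (k m : ℕ), τ ≤ k * B →
      min n (1 + m) ≤ (A τ j ((k + m) * B)).card := by
    intro τ j k m hτ
    induction m with
    | zero =>
      have h1 : 1 ≤ (A τ j (k * B)).card :=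
        Finset.card_pos.2 ⟨j, hself τ j hτ⟩
      simpa using le_trans (min_le_right n 1) h1
    | succ m ih =>
      have hτ' : τ ≤ (k + m) * B := hτ.trans (Nat.mul_le_mul_right B (Nat.le_add_right k m))
      rcases hgrow τ j (k + m) hτ' with hu | hlt
      · have hfull : A τ j ((k + m + 1) * B) = Finset.univ := by
          have := hmono τ j hτ' (Nat.mul_le_mul_right B (Nat.le_succ (k + m)))
          rw [hu] at this
          exact Finset.eq_univ_of_forall fun x => this (Finset.mem_univ x)
        rw [show k + (m + 1) = k + m + 1 from rfl, hfull]
        simp [min_le_left]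
      · have := le_trans (Nat.add_le_add_right ih 1) hlt
        rw [show k + (m + 1) = k + m + 1 from rfl]
        omega
  -- all informed sets are full at time t'
  have hTle : T ≤ (T ⌈/⌉ B) * B := by
    simpa [mul_comm] using le_smul_ceilDiv (b := T) hB
  have hfull : ∀ (τ : ℕ) (j : Fin n), 1 ≤ τ → τ ≤ T →
      A τ j t' = Finset.univ := by
    intro τ j h1 h2
    have hτ : τ ≤ (T ⌈/⌉ B) * B := h2.trans hTle
    have hc := hcard τ j (T ⌈/⌉ B) (n - 1) hτ
    have hmin : min n (1 + (n - 1)) = n := by omega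
    rw [hmin] at hc
    apply Finset.eq_univ_of_card
    have hle : (A τ j t' ).card ≤ Fintype.card (Fin n) := Finset.card_le_univ _
    rw [Fintype.card_fin] at hle ⊢
    exact le_antisymm hle hc
  intro i p
  have hfil : ∀ τ ∈ Finset.Icc 1 (min t' T),
      Finset.univ.filter (fun j => i ∈ A τ j t') = Finset.univ := by
    intro τ hτ
    rw [Finset.mem_Icc] at hτ
    refine Finset.filter_true_of_mem fun j _ => ?_
    rw [hfull τ j hτ.1 (hτ.2.trans (min_le_right _ _))]
    exact Finset.mem_univ i
  have hm : mDist i t' p = mCtr t' p := by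
    rw [hmDist, hmCtr]
    congr 1
    exact Finset.sum_congr rfl fun τ hτ => by rw [hfil τ hτ]
  refine ⟨hm, fun hpos => ?_⟩
  have hz : mCtr t' p * zDist i t' p = mCtr t' p * zCtr t' p := by
    rw [hzCtr, ← hm, hzDist]
    congr 1
    exact Finset.sum_congr rfl fun τ hτ => by rw [hfil τ hτ]
  exact mul_left_cancel₀ (ne_of_gt hpos) hz
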